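/- Let (F, α) be a sheaf of k-modules on X equipped with a G-equivariant structure. Then there exist a sheaf J of k-modules on X which is an injective object of the abelian category Sh(X;k), a G-equivariant structure β on J, and a monomorphism i : F ⟶ J in Sh(X;k) which is G-equivariant, i.e. for every g ∈ G the composite of i with β_g equals the composite of α_g with (μ g)_*(i) : (μ g)_* F ⟶ (μ g)_* J. -/

import Mathlib

/-!
STATEMENT 9: Every `G`-equivariant sheaf `(F, α)` of `k`-modules on `X` admits a
`G`-equivariant monomorphism into an injective object of `Sh(X;k)` equipped with a
`G`-equivariant structure.
-/

open CategoryTheory CategoryTheory.Limits TopologicalSpace Opposite TopCat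

noncomputable section

variable (k : Type) [Field k] (X : TopCat.{0}) (G : Type) [Group G]
  [MulAction G X] [ContinuousConstSMul G X]

/-- The category `Sh(X;k)` of sheaves of `k`-modules on `X`. -/
abbrev Shv := CategoryTheory.Sheaf (Opens.grothendieckTopology X) (ModuleCat.{0} k)

instance : HasSheafify (Opens.grothendieckTopology X) (ModuleCat.{0} k) :=
  inferInstance

/-- The homeomorphism `x ↦ g • x` of `X` as a morphism of `TopCat`; `g ↦ mu g` is the
action homomorphism `μ : G → Homeo(X)`. -/
def mu (g : G) : X ⟶ X := TopCat.ofHom ⟨fun x => g • x, continuous_const_smul g⟩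

lemma mu_mul (g h : G) : mu X G (h * g) = mu X G g ≫ mu X G h := by
  ext x; exact mul_smul h g x

lemma mu_one : mu X G (1 : G) = 𝟙 X := by
  ext x; exact one_smul G x

/-- The pushforward functor `(μ g)_* : Sh(X;k) ⥤ Sh(X;k)`. -/
abbrev push (g : G) : Shv k X ⥤ Shv k X :=
  (Opens.map (mu X G g)).sheafPushforwardContinuous (ModuleCat.{0} k)
    (Opens.grothendieckTopology X) (Opens.grothendieckTopology X)

/-- A `G`-equivariant structure on a sheaf `F` of `k`-modules on `X`: a family of
isomorphisms `α_g : F ≅ (μ g)_* F` in `Sh(X;k)` such that `α_1` is the canonical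
identification `F ≅ (μ 1)_* F` and such that, for all `g h : G`,
`α_{hg}` equals the composite of `α_h` with `(μ h)_*(α_g)`, modulo the canonical
isomorphism `(μ h)_*((μ g)_* F) ≅ (μ(hg))_* F` (the cocycle condition). -/
structure EquivariantStructure (F : Shv k X) where
  iso : ∀ g : G, F ≅ (push k X G g).obj F
  one : (iso 1).hom.hom = (TopCat.Presheaf.pushforwardEq (mu_one X G).symm F.val).hom
  cocycle : ∀ g h : G, (iso (h * g)).hom.hom =
    (iso h).hom.hom ≫ (TopCat.Presheaf.pushforward (ModuleCat.{0} k) (mu X G h)).map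
      (iso g).hom.hom ≫ (TopCat.Presheaf.pushforwardEq (mu_mul X G g h).symm F.val).hom

variable {k X G}

/-- `τ_g(U) : F(U) ⟶ F(g⁻¹ • U)`, the `U`-component of the isomorphism `α_g`, using the
identification `((μ g)_* F)(U) = F(g⁻¹ • U)` (note `(μ g)⁻¹(U) = g⁻¹ • U`). -/
def tau {F : Shv k X} (e : EquivariantStructure k X G F) (g : G) (U : Opens X) :
    F.val.obj (op U) ⟶ F.val.obj (op ((Opens.map (mu X G g)).obj U)) :=
  (e.iso g).hom.hom.app (op U)

namespace Statement9

open TopCat.Presheaf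

variable {k : Type} [Field k] {X : TopCat.{0}} {G : Type} [Group G]
  [MulAction G X] [ContinuousConstSMul G X]

/-- Every module over a field is an injective object. -/
instance (M : ModuleCat.{0} k) : Injective M where
  factors {A B} g f hf := by
    rw [ModuleCat.mono_iff_injective] at hf
    obtain ⟨l, hl⟩ := f.hom.exists_leftInverse_of_injective
      (LinearMap.ker_eq_bot.2 hf)
    exact ⟨ModuleCat.ofHom l ≫ g, by
      ext a
      have : l (f a) = a := congrArg (fun φ => φ a) hl
      simp [LinearMap.comp_apply, this]⟩

lemma shv_ext {S T : Shv k X} (h : S.val = T.val) : S = T := by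
  cases S; cases T; cases h; rfl

lemma compEq (g h : G) (S : Shv k X) :
    (push k X G (h * g)).obj S = (push k X G h).obj ((push k X G g).obj S) :=
  shv_ext (pushforward_eq' (mu_mul X G g h) S.val)

lemma oneEq (S : Shv k X) : S = (push k X G 1).obj S :=
  shv_ext (pushforward_eq' (mu_one X G).symm S.val)

lemma eqToHom_val {S T : Shv k X} (E : S = T) :
    (eqToHom E).hom = eqToHom (congrArg Sheaf.val E) := by
  subst E; rfl

lemma pushforwardEq_eq_eqToHom {Y : TopCat} {f g : Y ⟶ Y} (e : f = g)
    (ℱ : TopCat.Presheaf (ModuleCat.{0} k) Y) :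
    (pushforwardEq e ℱ).hom = eqToHom (pushforward_eq' e ℱ) := by
  subst e
  ext U
  rw [pushforwardEq_hom_app]
  simp
  rfl

/-- Naturality of `pushforwardEq` in the presheaf. -/
lemma pf_natural {Y : TopCat} {f f' : Y ⟶ Y} (e : f = f')
    {A B : TopCat.Presheaf (ModuleCat.{0} k) Y} (φ : A ⟶ B) :
    (pushforward (ModuleCat.{0} k) f).map φ ≫ (pushforwardEq e B).hom =
      (pushforwardEq e A).hom ≫ (pushforward (ModuleCat.{0} k) f').map φ := by
  subst e
  rw [pushforwardEq_eq_eqToHom, pushforwardEq_eq_eqToHom]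
  simp

/-- Naturality of `compEq`. -/
lemma compEq_natural (g h : G) {S T : Shv k X} (φ : S ⟶ T) :
    (push k X G (h * g)).map φ ≫ eqToHom (compEq g h T) =
      eqToHom (compEq g h S) ≫ (push k X G h).map ((push k X G g).map φ) := by
  apply CategoryTheory.Sheaf.hom_ext
  rw [ObjectProperty.FullSubcategory.comp_hom, ObjectProperty.FullSubcategory.comp_hom,
    eqToHom_val, eqToHom_val]
  have hpf := pf_natural (mu_mul X G g h) φ.hom
  rw [pushforwardEq_eq_eqToHom, pushforwardEq_eq_eqToHom] at hpf
  exact hpf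

/-- Naturality of `oneEq`. -/
lemma oneEq_natural {S T : Shv k X} (φ : S ⟶ T) :
    φ ≫ eqToHom (oneEq T) = eqToHom (oneEq S) ≫ (push k X G 1).map φ := by
  apply CategoryTheory.Sheaf.hom_ext
  rw [ObjectProperty.FullSubcategory.comp_hom, ObjectProperty.FullSubcategory.comp_hom,
    eqToHom_val, eqToHom_val]
  have hpf := pf_natural (mu_one X G).symm φ.hom
  rw [pushforwardEq_eq_eqToHom, pushforwardEq_eq_eqToHom] at hpf
  exact hpf

/-- `S = (μ h)_* (μ g)_* S` when `h * g = 1`. -/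
lemma idCompEq (g h : G) (e : h * g = 1) (S : Shv k X) :
    S = (push k X G h).obj ((push k X G g).obj S) :=
  shv_ext (pushforward_eq'
    (show 𝟙 X = mu X G g ≫ mu X G h by rw [← mu_mul, e, mu_one]) S.val)

lemma idCompEq_natural (g h : G) (e : h * g = 1) {S T : Shv k X} (φ : S ⟶ T) :
    φ ≫ eqToHom (idCompEq g h e T) =
      eqToHom (idCompEq g h e S) ≫ (push k X G h).map ((push k X G g).map φ) := by
  have e' : 𝟙 X = mu X G g ≫ mu X G h := by rw [← mu_mul, e, mu_one]
  apply CategoryTheory.Sheaf.hom_ext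
  rw [ObjectProperty.FullSubcategory.comp_hom, ObjectProperty.FullSubcategory.comp_hom,
    eqToHom_val, eqToHom_val]
  have hpf := pf_natural e' φ.hom
  rw [pushforwardEq_eq_eqToHom, pushforwardEq_eq_eqToHom] at hpf
  exact hpf

/-- The pushforward along `μ g` is an equivalence. -/
def pushEquiv (g : G) : Shv k X ≌ Shv k X :=
  CategoryTheory.Equivalence.mk (push k X G g) (push k X G g⁻¹)
    (NatIso.ofComponents
      (fun S => eqToIso (idCompEq g g⁻¹ (inv_mul_cancel g) S))
      (fun φ => idCompEq_natural g g⁻¹ (inv_mul_cancel g) φ))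
    (NatIso.ofComponents
      (fun S => (eqToIso (idCompEq g⁻¹ g (mul_inv_cancel g) S)).symm)
      (fun {S T} φ => by
        simp only [Iso.symm_hom, eqToIso.inv]
        have h := idCompEq_natural g⁻¹ g (mul_inv_cancel g) φ
        have h2 : (push k X G g).map ((push k X G g⁻¹).map φ) =
            eqToHom (idCompEq g⁻¹ g (mul_inv_cancel g) S).symm ≫ φ ≫
              eqToHom (idCompEq g⁻¹ g (mul_inv_cancel g) T) := by
          rw [← cancel_epi (eqToHom (idCompEq g⁻¹ g (mul_inv_cancel g) S)), ← h]
          simp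
        show (push k X G g).map ((push k X G g⁻¹).map φ) ≫ _ = _
        rw [h2]
        simp))

/-! ### The Godement embedding into an injective sheaf -/

attribute [local instance] Classical.propDecidable

/-- Skyscraper sheaf at `x` with value the stalk of `S` at `x`. -/
def sky (x : ↑X) (S : Shv k X) : Shv k X :=
  skyscraperSheaf x (TopCat.Presheaf.stalk S.val x)

instance (x : ↑X) (S : Shv k X) : Injective (sky x S) :=
  Adjunction.map_injective (stalkSkyscraperSheafAdjunction x)
    (TopCat.Presheaf.stalk S.val x) inferInstance

/-- The Godement sheaf of `S`: the product of the skyscrapers of all stalks. -/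
abbrev gode (S : Shv k X) : Shv k X := ∏ᶜ (fun x : ↑X => sky x S)

instance (S : Shv k X) : Injective (gode S) := by
  unfold gode; infer_instance

/-- The canonical map `S ⟶ sky x S`, the unit of the stalk-skyscraper adjunction. -/
def toSky (x : ↑X) (S : Shv k X) : S ⟶ sky x S :=
  (stalkSkyscraperSheafAdjunction (C := ModuleCat.{0} k) x).unit.app S

/-- Stalk of `toSky x S` at `x` is (split) mono. -/
lemma mono_stalk_toSky (x : ↑X) (S : Shv k X) :
    Mono ((TopCat.Presheaf.stalkFunctor (ModuleCat.{0} k) x).map (toSky x S).hom) := by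
  have h := (stalkSkyscraperSheafAdjunction (C := ModuleCat.{0} k)
    x).left_triangle_components S
  haveI : Mono ((TopCat.Presheaf.stalkFunctor (ModuleCat.{0} k) x).map (toSky x S).hom ≫
      (stalkSkyscraperSheafAdjunction (C := ModuleCat.{0} k) x).counit.app
        (TopCat.Presheaf.stalk S.val x)) := by
    have h' : (TopCat.Presheaf.stalkFunctor (ModuleCat.{0} k) x).map (toSky x S).hom ≫
        (stalkSkyscraperSheafAdjunction (C := ModuleCat.{0} k) x).counit.app
          (TopCat.Presheaf.stalk S.val x) = 𝟙 _ := h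
    rw [h']; exact ⟨fun _ _ w => (Category.comp_id _).symm.trans (w.trans (Category.comp_id _))⟩
  exact mono_of_mono _ ((stalkSkyscraperSheafAdjunction (C := ModuleCat.{0} k) x).counit.app _)

/-- The Godement embedding. -/
def godeι (S : Shv k X) : S ⟶ gode S := Pi.lift (fun x => toSky x S)

instance mono_godeι (S : Shv k X) : Mono (godeι S) := by
  haveI key : ∀ x : ↑X,
      Mono ((TopCat.Presheaf.stalkFunctor (ModuleCat.{0} k) x).map (godeι S).hom) := by
    intro x
    have h : godeι S ≫ Pi.π _ x = toSky x S := limit.lift_π _ _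
    have heq : (TopCat.Presheaf.stalkFunctor (ModuleCat.{0} k) x).map (godeι S).hom ≫
        (TopCat.Presheaf.stalkFunctor (ModuleCat.{0} k) x).map
          (Pi.π (fun x : ↑X => sky x S) x).hom =
        (TopCat.Presheaf.stalkFunctor (ModuleCat.{0} k) x).map (toSky x S).hom := by
      rw [← Functor.map_comp]
      exact congrArg _ (congrArg InducedCategory.Hom.hom h)
    haveI hm := mono_stalk_toSky x S
    rw [← heq] at hm
    exact mono_of_mono _ ((TopCat.Presheaf.stalkFunctor (ModuleCat.{0} k) x).map
      (Pi.π (fun x : ↑X => sky x S) x).hom)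
  exact TopCat.Presheaf.mono_of_stalk_mono (godeι S)

/-! ### The equivariant injective sheaf -/

variable (k X G) in
/-- The family `a ↦ (μ a)_* Q`. -/
abbrev Pfam (Q : Shv k X) : G → Shv k X := fun a => (push k X G a).obj Q

variable (k X G) in
/-- The product `∏_a (μ a)_* Q`. -/
abbrev bigJ (Q : Shv k X) : Shv k X := ∏ᶜ Pfam k X G Q

instance (g : G) : (push k X G g).IsEquivalence :=
  (pushEquiv (k := k) (X := X) g).isEquivalence_functor

lemma injective_push (g : G) (Q : Shv k X) [Injective Q] :
    Injective ((push k X G g).obj Q) :=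
  ((pushEquiv (k := k) (X := X) g).map_injective_iff Q).2 inferInstance

instance (Q : Shv k X) [Injective Q] : Injective (bigJ k X G Q) := by
  have : ∀ a : G, Injective (Pfam k X G Q a) := fun a => injective_push a Q
  unfold bigJ; infer_instance

lemma pi_cast {Q : Shv k X} {b c : G} (e : b = c) :
    Pi.π (Pfam k X G Q) b ≫ eqToHom (congrArg (Pfam k X G Q) e) =
      Pi.π (Pfam k X G Q) c := by
  subst e; simp

/-- Reindexing isomorphism `∏_a (μ a)_* Q ≅ ∏_a (μ g)_* (μ a)_* Q`. -/
@[simps]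
def reIdx (g : G) (Q : Shv k X) :
    bigJ k X G Q ≅ ∏ᶜ (fun a => (push k X G g).obj (Pfam k X G Q a)) where
  hom := Pi.map' (fun a => g * a) (fun a => eqToHom (compEq a g Q))
  inv := Pi.map' (fun a => g⁻¹ * a) (fun a =>
    eqToHom ((compEq (g⁻¹ * a) g Q).symm.trans
      (congrArg (Pfam k X G Q) (mul_inv_cancel_left g a))))
  hom_inv_id := by
    rw [Pi.map'_comp_map']
    exact (Pi.map'_eq (funext fun a => mul_inv_cancel_left g a)
      (q' := fun a => 𝟙 _) (fun a => by simp)).trans Pi.map'_id_id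
  inv_hom_id := by
    rw [Pi.map'_comp_map']
    exact (Pi.map'_eq (funext fun a => inv_mul_cancel_left g a)
      (q' := fun a => 𝟙 _) (fun a => by simp)).trans Pi.map'_id_id

/-- The equivariance isomorphism `β_g : ∏_a (μ a)_* Q ≅ (μ g)_* ∏_a (μ a)_* Q`. -/
def mybeta (g : G) (Q : Shv k X) : bigJ k X G Q ≅ (push k X G g).obj (bigJ k X G Q) :=
  reIdx g Q ≪≫ (PreservesProduct.iso (push k X G g) (Pfam k X G Q)).symm

lemma mybeta_comp_π (g a : G) (Q : Shv k X) :
    (mybeta g Q).hom ≫ (push k X G g).map (Pi.π (Pfam k X G Q) a) =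
      Pi.π (Pfam k X G Q) (g * a) ≫ eqToHom (compEq a g Q) := by
  rw [← piComparison_comp_π]
  have : (mybeta g Q).hom ≫ piComparison (push k X G g) (Pfam k X G Q) =
      (reIdx g Q).hom := by
    simp [mybeta, ← PreservesProduct.iso_hom]
  rw [reassoc_of% this, reIdx_hom, Pi.map'_comp_π]

lemma pushJ_ext (g : G) {Q : Shv k X} {T : Shv k X}
    (u v : T ⟶ (push k X G g).obj (bigJ k X G Q))
    (h : ∀ a : G, u ≫ (push k X G g).map (Pi.π (Pfam k X G Q) a) =
      v ≫ (push k X G g).map (Pi.π (Pfam k X G Q) a)) : u = v := by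
  rw [← cancel_mono (piComparison (push k X G g) (Pfam k X G Q))]
  apply limit.hom_ext
  rintro ⟨a⟩
  simpa [piComparison_comp_π] using h a

lemma mybeta_one (Q : Shv k X) :
    (mybeta (1 : G) Q).hom = eqToHom (oneEq (bigJ k X G Q)) := by
  apply pushJ_ext
  intro a
  rw [mybeta_comp_π, ← oneEq_natural (Pi.π (Pfam k X G Q) a)]
  conv_rhs => rw [← pi_cast (Q := Q) (one_mul a)]
  rw [Category.assoc, eqToHom_trans]

lemma mybeta_cocycle (g h : G) (Q : Shv k X) :
    (mybeta (h * g) Q).hom =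
      (mybeta h Q).hom ≫ (push k X G h).map (mybeta g Q).hom ≫
        eqToHom (compEq g h (bigJ k X G Q)).symm := by
  apply pushJ_ext
  intro a
  rw [mybeta_comp_π]
  have step1 : eqToHom (compEq g h (bigJ k X G Q)).symm ≫
      (push k X G (h * g)).map (Pi.π (Pfam k X G Q) a) =
      (push k X G h).map ((push k X G g).map (Pi.π (Pfam k X G Q) a)) ≫
        eqToHom (compEq g h (Pfam k X G Q a)).symm := by
    rw [← cancel_epi (eqToHom (compEq g h (bigJ k X G Q))), eqToHom_trans_assoc,
      eqToHom_refl, Category.id_comp, ← Category.assoc,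
      ← compEq_natural g h (Pi.π (Pfam k X G Q) a), Category.assoc, eqToHom_trans,
      eqToHom_refl, Category.comp_id]
  rw [Category.assoc, Category.assoc, step1,
    ← Functor.map_comp_assoc (push k X G h) (mybeta g Q).hom
      ((push k X G g).map (Pi.π (Pfam k X G Q) a)),
    mybeta_comp_π, Functor.map_comp, eqToHom_map, Category.assoc,
    reassoc_of% (mybeta_comp_π h (g * a) Q)]
  conv_rhs => rw [← pi_cast (Q := Q) (mul_assoc h g a)]
  simp

lemma val_eqToHom_compEq_symm (g h : G) (S : Shv k X) :
    (eqToHom (compEq g h S).symm).hom =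
      (pushforwardEq (mu_mul X G g h).symm S.val).hom := by
  rw [eqToHom_val, pushforwardEq_eq_eqToHom]
  rfl

/-- The equivariant structure on `bigJ Q`. -/
def betaStruct (Q : Shv k X) : EquivariantStructure k X G (bigJ k X G Q) where
  iso g := mybeta g Q
  one := by
    rw [mybeta_one, eqToHom_val, pushforwardEq_eq_eqToHom]
    rfl
  cocycle g h := by
    rw [mybeta_cocycle g h Q, ObjectProperty.FullSubcategory.comp_hom,
      ObjectProperty.FullSubcategory.comp_hom, val_eqToHom_compEq_symm]
    rfl

/-- The sheaf-level form of the cocycle condition. -/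
lemma cocycle_sheaf {S : Shv k X} (α : EquivariantStructure k X G S) (g h : G) :
    (α.iso (h * g)).hom = (α.iso h).hom ≫ (push k X G h).map (α.iso g).hom ≫
      eqToHom (compEq g h S).symm := by
  apply CategoryTheory.Sheaf.hom_ext
  rw [α.cocycle g h, ObjectProperty.FullSubcategory.comp_hom,
    ObjectProperty.FullSubcategory.comp_hom, val_eqToHom_compEq_symm]
  rfl

/-- The equivariant embedding of `F` into `bigJ (gode F)`. -/
def bigi (F : Shv k X) (α : EquivariantStructure k X G F) :
    F ⟶ bigJ k X G (gode F) :=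
  Pi.lift (fun a => (α.iso a).hom ≫ (push k X G a).map (godeι F))

lemma mono_bigi (F : Shv k X) (α : EquivariantStructure k X G F) :
    Mono (bigi F α) := by
  have h : bigi F α ≫ Pi.π (Pfam k X G (gode F)) (1 : G) =
      (α.iso 1).hom ≫ (push k X G 1).map (godeι F) := limit.lift_π _ _
  haveI : Mono ((push k X G 1).map (godeι F)) := Functor.map_mono _ _
  haveI : Mono (bigi F α ≫ Pi.π (Pfam k X G (gode F)) (1 : G)) := by
    rw [h]; infer_instance
  exact mono_of_mono _ (Pi.π (Pfam k X G (gode F)) (1 : G))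

lemma equivariant_bigi (F : Shv k X) (α : EquivariantStructure k X G F) (g : G) :
    bigi F α ≫ (mybeta g (gode F)).hom =
      (α.iso g).hom ≫ (push k X G g).map (bigi F α) := by
  apply pushJ_ext g
  intro a
  rw [Category.assoc, mybeta_comp_π]
  have hl : bigi F α ≫ Pi.π (Pfam k X G (gode F)) (g * a) =
      (α.iso (g * a)).hom ≫ (push k X G (g * a)).map (godeι F) := limit.lift_π _ _
  rw [reassoc_of% hl, compEq_natural a g (godeι F),
    reassoc_of% (cocycle_sheaf α a g)]
  have hr : (push k X G g).map (bigi F α) ≫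
      (push k X G g).map (Pi.π (Pfam k X G (gode F)) a) =
      (push k X G g).map ((α.iso a).hom ≫ (push k X G a).map (godeι F)) := by
    rw [← Functor.map_comp]
    exact congrArg _ (limit.lift_π _ _)
  rw [Category.assoc, hr, Functor.map_comp]
  simp

end Statement9

/-- there exist a sheaf `J` which is injective in `Sh(X;k)`, a `G`-equivariant
structure `β` on `J`, and a monomorphism `i : F ⟶ J` which is `G`-equivariant, i.e.
`i ≫ β_g = α_g ≫ (μ g)_*(i)` for every `g`. -/
theorem exists_equivariant_injective_embedding {F : Shv k X}
    (α : EquivariantStructure k X G F) :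
    ∃ (J : Shv k X) (β : EquivariantStructure k X G J) (i : F ⟶ J),
      Injective J ∧ Mono i ∧
      ∀ g : G, i ≫ (β.iso g).hom = (α.iso g).hom ≫ (push k X G g).map i :=
  ⟨Statement9.bigJ k X G (Statement9.gode F), Statement9.betaStruct _,
    Statement9.bigi F α, inferInstance, Statement9.mono_bigi F α,
    fun g => Statement9.equivariant_bigi F α g⟩
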